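/- Under (A0), (B1), (B2), if 𝔼_x(τ_ϑ) < +∞ for all x ∈ E, then g(x) = 𝔼_x(τ_ϑ) is a potential for (X(t)) with (I − P)g = 𝟙, and g(u) ≥ g(e) + 𝔼_u[ g(H_1) ; 𝒯_ϑ > 1 ] for all u ∈ E. Consequently V = 𝔼_·(𝒯_ϑ) satisfies V(x) = 𝔼_x(τ_ϑ)/𝔼_e(τ_ϑ) for all x ∈ E. -/

import Mathlib

open scoped ENNReal Classical BigOperators
open Filter

noncomputable section

namespace RW

variable {G : Type*}

/-- One-step transition operator `Pφ(x) = Σ_y p(x,y) φ(y)`. -/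
def kapp (p : G → G → ℝ≥0∞) (φ : G → ℝ≥0∞) (x : G) : ℝ≥0∞ := ∑' y, p x y * φ y

/-- n-step transition kernel. -/
def kiter (p : G → G → ℝ≥0∞) : ℕ → G → G → ℝ≥0∞
  | 0 => fun x y => if x = y then 1 else 0
  | n + 1 => fun x y => ∑' z, p x z * kiter p n z y

/-- Green function `G(x,y) = Σ_t ℙ_x(X(t)=y)`. -/
def green (p : G → G → ℝ≥0∞) (x y : G) : ℝ≥0∞ := ∑' n, kiter p n x y

/-- Green operator `Gφ(x) = Σ_y G(x,y) φ(y)`. -/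
def greenApp (p : G → G → ℝ≥0∞) (φ : G → ℝ≥0∞) (x : G) : ℝ≥0∞ := ∑' y, green p x y * φ y

/-- Probability of first hitting `y` at time `n ≥ 1`. -/
def fhit (p : G → G → ℝ≥0∞) : ℕ → G → G → ℝ≥0∞
  | 0 => fun _ _ => 0
  | 1 => p
  | n + 2 => fun x y => ∑' z, if z = y then 0 else p x z * fhit p (n + 1) z y

/-- Hitting probability `Q(x,y) = ℙ_x(∃ t ≥ 1, X(t) = y)`. -/
def hitProb (p : G → G → ℝ≥0∞) (x y : G) : ℝ≥0∞ := ∑' n, fhit p n x y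

/-- Survival probability `ℙ_x(τ_ϑ > n)`. -/
def surv (p : G → G → ℝ≥0∞) (n : ℕ) (x : G) : ℝ≥0∞ := ∑' y, kiter p n x y

/-- Expected lifetime `𝔼_x(τ_ϑ) = Σ_n ℙ_x(τ_ϑ > n)`. -/
def gexp (p : G → G → ℝ≥0∞) (x : G) : ℝ≥0∞ := ∑' n, surv p n x

variable [Group G]

/-- Matrix coefficients `a_u(x,y)` of the operator `A_u = T_u P - P T_u`. -/
def acoef (p : G → G → ℝ≥0∞) (E : Set G) (u x y : G) : ℝ≥0∞ :=
  if y * u⁻¹ ∈ E then p (x * u) y - p x (y * u⁻¹) else p (x * u) y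

/-- The operator `A_u φ(x) = Σ_y a_u(x,y) φ(y)`. -/
def Aop (p : G → G → ℝ≥0∞) (E : Set G) (u : G) (φ : G → ℝ≥0∞) (x : G) : ℝ≥0∞ :=
  ∑' y, acoef p E u x y * φ y

/-- Ladder height transition kernel `p_H(x,y) = G A_x 𝟙_{y}(e)`. -/
def ladder (p : G → G → ℝ≥0∞) (E : Set G) (x y : G) : ℝ≥0∞ :=
  ∑' z, green p 1 z * acoef p E x z y

/-- The renewal function `V(x) = 𝔼_x(𝒯_ϑ)` of the ladder height process. -/
def V (p : G → G → ℝ≥0∞) (E : Set G) (x : G) : ℝ≥0∞ :=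
  ∑' n, surv (ladder p E) n x

end RW

end

open RW

noncomputable section Aux

namespace RWAux

set_option linter.unusedSectionVars false

variable {G : Type*} [Group G] [Countable G]

lemma kiter_zero (q : G → G → ℝ≥0∞) (x y : G) :
    kiter q 0 x y = if x = y then 1 else 0 := rfl

lemma kiter_succ (q : G → G → ℝ≥0∞) (n : ℕ) (x y : G) :
    kiter q (n + 1) x y = ∑' z, q x z * kiter q n z y := rfl

/-! ### Basic kernel lemmas (for an arbitrary kernel `q`) -/

lemma surv_zero (q : G → G → ℝ≥0∞) (x : G) : surv q 0 x = 1 := by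
  unfold surv
  rw [tsum_eq_single x (fun y hy => by rw [kiter_zero, if_neg (fun h => hy h.symm)])]
  rw [kiter_zero, if_pos rfl]

lemma surv_succ (q : G → G → ℝ≥0∞) (n : ℕ) (x : G) :
    surv q (n + 1) x = kapp q (surv q n) x := by
  unfold surv kapp
  calc (∑' y, kiter q (n + 1) x y)
      = ∑' y, ∑' z, q x z * kiter q n z y := tsum_congr fun y => kiter_succ q n x y
    _ = ∑' z, ∑' y, q x z * kiter q n z y := ENNReal.tsum_comm
    _ = ∑' z, q x z * ∑' y, kiter q n z y := tsum_congr fun z => ENNReal.tsum_mul_left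

lemma kapp_mono (q : G → G → ℝ≥0∞) {φ ψ : G → ℝ≥0∞} (h : ∀ y, φ y ≤ ψ y) (x : G) :
    kapp q φ x ≤ kapp q ψ x :=
  ENNReal.tsum_le_tsum fun y => mul_le_mul_right (h y) _

lemma surv_le_one {q : G → G → ℝ≥0∞} (hsub : ∀ x, (∑' y, q x y) ≤ 1) :
    ∀ (n : ℕ) (x : G), surv q n x ≤ 1
  | 0, x => le_of_eq (surv_zero q x)
  | n + 1, x => by
      rw [surv_succ]
      calc kapp q (surv q n) x ≤ kapp q (fun _ => 1) x :=
            kapp_mono q (fun y => surv_le_one hsub n y) x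
        _ ≤ 1 := by simpa [kapp] using hsub x

lemma surv_antitone {q : G → G → ℝ≥0∞} (hsub : ∀ x, (∑' y, q x y) ≤ 1) :
    ∀ (n : ℕ) (x : G), surv q (n + 1) x ≤ surv q n x
  | 0, x => by
      rw [surv_succ, surv_zero]
      calc kapp q (surv q 0) x ≤ kapp q (fun _ => 1) x :=
            kapp_mono q (fun y => le_of_eq (surv_zero q y)) x
        _ ≤ 1 := by simpa [kapp] using hsub x
  | n + 1, x => by
      rw [surv_succ, surv_succ]
      exact kapp_mono q (fun y => surv_antitone hsub n y) x

lemma kiter_add (q : G → G → ℝ≥0∞) :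
    ∀ (m n : ℕ) (x y : G), kiter q (m + n) x y = ∑' z, kiter q m x z * kiter q n z y := by
  intro m
  induction m with
  | zero =>
      intro n x y
      rw [Nat.zero_add]
      rw [tsum_eq_single x (fun z hz => by
        rw [kiter_zero, if_neg (fun h => hz h.symm), zero_mul])]
      rw [kiter_zero, if_pos rfl, one_mul]
  | succ m ih =>
      intro n x y
      have hmn : m + 1 + n = (m + n) + 1 := by omega
      rw [hmn]
      show (∑' w, q x w * kiter q (m + n) w y) = ∑' z, kiter q (m + 1) x z * kiter q n z y
      calc (∑' w, q x w * kiter q (m + n) w y)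
          = ∑' w, q x w * ∑' z, kiter q m w z * kiter q n z y := by
            exact tsum_congr fun w => by rw [ih n w y]
        _ = ∑' w, ∑' z, q x w * (kiter q m w z * kiter q n z y) := by
            exact tsum_congr fun w => ENNReal.tsum_mul_left.symm
        _ = ∑' z, ∑' w, q x w * (kiter q m w z * kiter q n z y) := ENNReal.tsum_comm
        _ = ∑' z, (∑' w, q x w * kiter q m w z) * kiter q n z y := by
            refine tsum_congr fun z => ?_
            rw [← ENNReal.tsum_mul_right]
            exact tsum_congr fun w => (mul_assoc _ _ _).symm
        _ = ∑' z, kiter q (m + 1) x z * kiter q n z y := rfl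

lemma kiter_one (q : G → G → ℝ≥0∞) (x y : G) : kiter q 1 x y = q x y := by
  show (∑' z, q x z * kiter q 0 z y) = q x y
  rw [tsum_eq_single y (fun z hz => by rw [kiter_zero, if_neg hz, mul_zero])]
  rw [kiter_zero, if_pos rfl, mul_one]

lemma kiter_succ' (q : G → G → ℝ≥0∞) (n : ℕ) (x y : G) :
    kiter q (n + 1) x y = ∑' z, kiter q n x z * q z y := by
  rw [kiter_add q n 1 x y]
  exact tsum_congr fun z => by rw [kiter_one]

lemma surv_add (q : G → G → ℝ≥0∞) (m n : ℕ) (x : G) :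
    surv q (m + n) x = ∑' z, kiter q m x z * surv q n z := by
  unfold surv
  calc (∑' y, kiter q (m + n) x y)
      = ∑' y, ∑' z, kiter q m x z * kiter q n z y := tsum_congr fun y => kiter_add q m n x y
    _ = ∑' z, ∑' y, kiter q m x z * kiter q n z y := ENNReal.tsum_comm
    _ = ∑' z, kiter q m x z * ∑' y, kiter q n z y := tsum_congr fun z => ENNReal.tsum_mul_left

lemma kapp_tsum (q : G → G → ℝ≥0∞) (f : ℕ → G → ℝ≥0∞) (x : G) :
    kapp q (fun y => ∑' n, f n y) x = ∑' n, kapp q (f n) x := by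
  unfold kapp
  calc (∑' y, q x y * ∑' n, f n y)
      = ∑' y, ∑' n, q x y * f n y := tsum_congr fun y => ENNReal.tsum_mul_left.symm
    _ = ∑' n, ∑' y, q x y * f n y := ENNReal.tsum_comm

lemma kapp_add (q : G → G → ℝ≥0∞) (φ ψ : G → ℝ≥0∞) (x : G) :
    kapp q (fun y => φ y + ψ y) x = kapp q φ x + kapp q ψ x := by
  unfold kapp
  rw [← ENNReal.tsum_add]
  exact tsum_congr fun y => mul_add _ _ _

lemma kapp_mul_const (q : G → G → ℝ≥0∞) (a : ℝ≥0∞) (φ : G → ℝ≥0∞) (x : G) :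
    kapp q (fun y => a * φ y) x = a * kapp q φ x := by
  unfold kapp
  rw [← ENNReal.tsum_mul_left]
  exact tsum_congr fun y => mul_left_comm _ _ _

lemma gexp_eq_tsum_green (q : G → G → ℝ≥0∞) (x : G) :
    gexp q x = ∑' y, green q x y := by
  unfold gexp surv green
  exact ENNReal.tsum_comm

lemma one_le_gexp (q : G → G → ℝ≥0∞) (x : G) : 1 ≤ gexp q x := by
  have := ENNReal.le_tsum (f := fun n => surv q n x) 0
  rwa [surv_zero] at this

lemma kapp_gexp (q : G → G → ℝ≥0∞) (x : G) : kapp q (gexp q) x + 1 = gexp q x := by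
  have h1 : gexp q x = surv q 0 x + ∑' n, surv q (n + 1) x :=
    tsum_eq_zero_add' ENNReal.summable
  have h2 : (∑' n, surv q (n + 1) x) = kapp q (gexp q) x := by
    rw [show gexp q = fun y => ∑' n, surv q n y from rfl, kapp_tsum]
    exact tsum_congr fun n => surv_succ q n x
  rw [h1, h2, surv_zero, add_comm]

/-! ### Lemmas specific to `p`, `E` -/

variable {p : G → G → ℝ≥0∞} {E : Set G}

lemma kiter_translate (hsupp : ∀ x y, p x y ≠ 0 → x ∈ E ∧ y ∈ E)
    (hmono : ∀ x ∈ E, ∀ y ∈ E, ∀ u ∈ E, p x y ≤ p (x * u) (y * u))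
    {u : G} (hu : u ∈ E) :
    ∀ (n : ℕ) {x : G}, x ∈ E → ∀ y, kiter p n x y ≤ kiter p n (x * u) (y * u) := by
  intro n
  induction n with
  | zero =>
      intro x hx y
      rw [kiter_zero, kiter_zero]
      by_cases h : x = y
      · rw [if_pos h, if_pos (by rw [h])]
      · rw [if_neg h, if_neg (fun he => h (mul_right_cancel he))]
  | succ n ih =>
      intro x hx y
      rw [kiter_succ, kiter_succ]
      calc (∑' z, p x z * kiter p n z y)
          ≤ ∑' z, p (x * u) (z * u) * kiter p n (z * u) (y * u) := by
            refine ENNReal.tsum_le_tsum fun z => ?_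
            by_cases hz : p x z = 0
            · rw [hz, zero_mul]; exact zero_le
            · exact mul_le_mul' (hmono x hx z (hsupp x z hz).2 u hu)
                (ih (hsupp x z hz).2 y)
        _ = ∑' w, p (x * u) w * kiter p n w (y * u) :=
            (Equiv.mulRight u).tsum_eq fun w => p (x * u) w * kiter p n w (y * u)

lemma green_one_eq_zero (hsupp : ∀ x y, p x y ≠ 0 → x ∈ E ∧ y ∈ E)
    (hone : (1 : G) ∈ E) {z : G} (hz : z ∉ E) : green p 1 z = 0 := by
  unfold green
  rw [ENNReal.tsum_eq_zero]
  intro n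
  cases n with
  | zero =>
      rw [kiter_zero, if_neg (fun h => hz (by rw [← h]; exact hone))]
  | succ n =>
      rw [kiter_succ' p n 1 z, ENNReal.tsum_eq_zero]
      intro w
      have : p w z = 0 := by
        by_contra h
        exact hz (hsupp w z h).2
      rw [this, mul_zero]

lemma ladder_mem (hsupp : ∀ x y, p x y ≠ 0 → x ∈ E ∧ y ∈ E)
    {x y : G} (h : ladder p E x y ≠ 0) : y ∈ E := by
  by_contra hy
  apply h
  unfold ladder
  rw [ENNReal.tsum_eq_zero]
  intro z
  have hp : ∀ w, p w y = 0 := fun w => by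
    by_contra hc; exact hy (hsupp w y hc).2
  have : acoef p E x z y = 0 := by
    unfold acoef
    split
    · rw [hp, zero_tsub]
    · exact hp _
  rw [this, mul_zero]

/-- `B_u(N) = Σ_z G(e,z)·ℙ_{zu}(τ > N)`. -/
def Bf (p : G → G → ℝ≥0∞) (u : G) (N : ℕ) : ℝ≥0∞ :=
  ∑' z, green p 1 z * surv p N (z * u)

lemma Bf_zero (u : G) : Bf p u 0 = gexp p 1 := by
  unfold Bf
  rw [gexp_eq_tsum_green]
  exact tsum_congr fun z => by rw [surv_zero, mul_one]

lemma Bf_antitone (hsub : ∀ x, (∑' y, p x y) ≤ 1) (u : G) (N : ℕ) :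
    Bf p u (N + 1) ≤ Bf p u N :=
  ENNReal.tsum_le_tsum fun z => mul_le_mul_right (surv_antitone hsub N (z * u)) _

lemma Bf_le_gexp_one (hsub : ∀ x, (∑' y, p x y) ≤ 1) (u : G) (N : ℕ) :
    Bf p u N ≤ gexp p 1 := by
  rw [← Bf_zero (p := p) u]
  unfold Bf
  exact ENNReal.tsum_le_tsum fun z =>
    mul_le_mul_right (le_trans (surv_le_one hsub N (z * u)) (by rw [surv_zero])) _

lemma Bf_le_tail (hsupp : ∀ x y, p x y ≠ 0 → x ∈ E ∧ y ∈ E)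
    (hmono : ∀ x ∈ E, ∀ y ∈ E, ∀ u ∈ E, p x y ≤ p (x * u) (y * u))
    (hone : (1 : G) ∈ E) {u : G} (hu : u ∈ E) (N : ℕ) :
    Bf p u N ≤ ∑' k, surv p (k + N) u := by
  unfold Bf green
  calc (∑' z, (∑' k, kiter p k 1 z) * surv p N (z * u))
      = ∑' z, ∑' k, kiter p k 1 z * surv p N (z * u) :=
        tsum_congr fun z => ENNReal.tsum_mul_right.symm
    _ = ∑' k, ∑' z, kiter p k 1 z * surv p N (z * u) := ENNReal.tsum_comm
    _ ≤ ∑' k, surv p (k + N) u := by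
        refine ENNReal.tsum_le_tsum fun k => ?_
        calc (∑' z, kiter p k 1 z * surv p N (z * u))
            ≤ ∑' z, kiter p k u (z * u) * surv p N (z * u) := by
              refine ENNReal.tsum_le_tsum fun z => ?_
              refine mul_le_mul_left ?_ _
              have := kiter_translate hsupp hmono hu k hone z
              rwa [one_mul] at this
          _ = ∑' w, kiter p k u w * surv p N w :=
              (Equiv.mulRight u).tsum_eq fun w => kiter p k u w * surv p N w
          _ = surv p (k + N) u := (surv_add p k N u).symm

lemma kapp_ladder (φ : G → ℝ≥0∞) (u : G) :
    kapp (ladder p E) φ u = ∑' z, green p 1 z * ∑' y, acoef p E u z y * φ y := by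
  unfold kapp ladder
  calc (∑' y, (∑' z, green p 1 z * acoef p E u z y) * φ y)
      = ∑' y, ∑' z, green p 1 z * acoef p E u z y * φ y :=
        tsum_congr fun y => ENNReal.tsum_mul_right.symm
    _ = ∑' z, ∑' y, green p 1 z * acoef p E u z y * φ y := ENNReal.tsum_comm
    _ = ∑' z, green p 1 z * ∑' y, acoef p E u z y * φ y := by
        refine tsum_congr fun z => ?_
        rw [← ENNReal.tsum_mul_left]
        exact tsum_congr fun y => mul_assoc _ _ _

lemma acoef_step (hsupp : ∀ x y, p x y ≠ 0 → x ∈ E ∧ y ∈ E)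
    (hmono : ∀ x ∈ E, ∀ y ∈ E, ∀ u ∈ E, p x y ≤ p (x * u) (y * u))
    {u z : G} (hu : u ∈ E) (hz : z ∈ E) (N : ℕ) :
    (∑' y, acoef p E u z y * surv p N y) + kapp p (fun w => surv p N (w * u)) z
      = surv p (N + 1) (z * u) := by
  have h2 : kapp p (fun w => surv p N (w * u)) z
      = ∑' y, p z (y * u⁻¹) * surv p N y := by
    unfold kapp
    rw [← (Equiv.mulRight u⁻¹).tsum_eq fun w => p z w * surv p N (w * u)]
    exact tsum_congr fun y => by
      simp only [Equiv.coe_mulRight, inv_mul_cancel_right]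
  rw [h2, ← ENNReal.tsum_add]
  have hterm : ∀ y, acoef p E u z y * surv p N y + p z (y * u⁻¹) * surv p N y
      = p (z * u) y * surv p N y := by
    intro y
    rw [← add_mul]
    congr 1
    unfold acoef
    by_cases hyE : y * u⁻¹ ∈ E
    · rw [if_pos hyE]
      refine tsub_add_cancel_of_le ?_
      have := hmono z hz (y * u⁻¹) hyE u hu
      rwa [inv_mul_cancel_right] at this
    · rw [if_neg hyE]
      have : p z (y * u⁻¹) = 0 := by
        by_contra h; exact hyE (hsupp _ _ h).2
      rw [this, add_zero]
  rw [tsum_congr hterm]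
  exact (surv_succ p N (z * u)).symm

lemma green_shift (σ : G → ℝ≥0∞) :
    (∑' z, green p 1 z * kapp p σ z) + σ 1 = ∑' z, green p 1 z * σ z := by
  have hG : ∀ w : G, (if (1 : G) = w then (1 : ℝ≥0∞) else 0) + ∑' z, green p 1 z * p z w
      = green p 1 w := by
    intro w
    have h1 : green p 1 w = kiter p 0 1 w + ∑' n, kiter p (n + 1) 1 w :=
      tsum_eq_zero_add' ENNReal.summable
    have h2 : (∑' n, kiter p (n + 1) 1 w) = ∑' z, green p 1 z * p z w := by
      calc (∑' n, kiter p (n + 1) 1 w)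
          = ∑' n, ∑' z, kiter p n 1 z * p z w := tsum_congr fun n => kiter_succ' p n 1 w
        _ = ∑' z, ∑' n, kiter p n 1 z * p z w := ENNReal.tsum_comm
        _ = ∑' z, green p 1 z * p z w := tsum_congr fun z => ENNReal.tsum_mul_right
    rw [h1, h2, kiter_zero]
  calc (∑' z, green p 1 z * kapp p σ z) + σ 1
      = (∑' w, (∑' z, green p 1 z * p z w) * σ w) + σ 1 := by
        congr 1
        unfold kapp
        calc (∑' z, green p 1 z * ∑' w, p z w * σ w)
            = ∑' z, ∑' w, green p 1 z * (p z w * σ w) :=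
              tsum_congr fun z => ENNReal.tsum_mul_left.symm
          _ = ∑' w, ∑' z, green p 1 z * (p z w * σ w) := ENNReal.tsum_comm
          _ = ∑' w, (∑' z, green p 1 z * p z w) * σ w := by
              refine tsum_congr fun w => ?_
              rw [← ENNReal.tsum_mul_right]
              exact tsum_congr fun z => (mul_assoc _ _ _).symm
    _ = (∑' w, (∑' z, green p 1 z * p z w) * σ w)
          + ∑' w, (if (1 : G) = w then (1 : ℝ≥0∞) else 0) * σ w := by
        congr 1
        rw [tsum_eq_single 1 (fun w hw => by
          rw [if_neg (fun h => hw h.symm), zero_mul])]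
        rw [if_pos rfl, one_mul]
    _ = ∑' w, ((if (1 : G) = w then (1 : ℝ≥0∞) else 0) + ∑' z, green p 1 z * p z w) * σ w := by
        rw [← ENNReal.tsum_add]
        exact tsum_congr fun w => by ring
    _ = ∑' w, green p 1 w * σ w := tsum_congr fun w => by rw [hG w]

lemma key_identity (hsupp : ∀ x y, p x y ≠ 0 → x ∈ E ∧ y ∈ E)
    (hmono : ∀ x ∈ E, ∀ y ∈ E, ∀ u ∈ E, p x y ≤ p (x * u) (y * u))
    (hone : (1 : G) ∈ E) {u : G} (hu : u ∈ E) (N : ℕ) :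
    kapp (ladder p E) (surv p N) u + Bf p u N = surv p N u + Bf p u (N + 1) := by
  have hB : Bf p u N = (∑' z, green p 1 z * kapp p (fun w => surv p N (w * u)) z)
      + surv p N u := by
    have hgs := green_shift (p := p) (σ := fun z => surv p N (z * u))
    rw [one_mul] at hgs
    exact hgs.symm
  rw [kapp_ladder, hB, ← add_assoc, ← ENNReal.tsum_add]
  have hterm : ∀ z, green p 1 z * (∑' y, acoef p E u z y * surv p N y)
      + green p 1 z * kapp p (fun w => surv p N (w * u)) z
      = green p 1 z * surv p (N + 1) (z * u) := by
    intro z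
    rw [← mul_add]
    by_cases hz : z ∈ E
    · rw [acoef_step hsupp hmono hu hz N]
    · rw [green_one_eq_zero hsupp hone hz, zero_mul, zero_mul]
  rw [tsum_congr hterm]
  rw [add_comm (surv p N u) _]
  rfl

lemma telescope {a b c : ℕ → ℝ≥0∞} (h : ∀ N, a N + b N = c N + b (N + 1)) :
    ∀ K, (∑ N ∈ Finset.range K, a N) + b 0 = (∑ N ∈ Finset.range K, c N) + b K := by
  intro K
  induction K with
  | zero => simp
  | succ K ih =>
      rw [Finset.sum_range_succ, Finset.sum_range_succ]
      calc (∑ N ∈ Finset.range K, a N) + a K + b 0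
          = ((∑ N ∈ Finset.range K, a N) + b 0) + a K := by ring
        _ = ((∑ N ∈ Finset.range K, c N) + b K) + a K := by rw [ih]
        _ = (∑ N ∈ Finset.range K, c N) + (a K + b K) := by ring
        _ = (∑ N ∈ Finset.range K, c N) + (c K + b (K + 1)) := by rw [h K]
        _ = _ := by ring

lemma PH_gexp (hsupp : ∀ x y, p x y ≠ 0 → x ∈ E ∧ y ∈ E)
    (hsub : ∀ x, (∑' y, p x y) ≤ 1)
    (hmono : ∀ x ∈ E, ∀ y ∈ E, ∀ u ∈ E, p x y ≤ p (x * u) (y * u))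
    (hone : (1 : G) ∈ E) {u : G} (hu : u ∈ E) :
    kapp (ladder p E) (gexp p) u + gexp p 1 = gexp p u := by
  have hsum : kapp (ladder p E) (gexp p) u = ∑' n, kapp (ladder p E) (surv p n) u := by
    rw [show gexp p = fun y => ∑' n, surv p n y from rfl, kapp_tsum]
  have htel := telescope (fun N => key_identity hsupp hmono hone hu N)
  rw [hsum, ENNReal.tsum_eq_iSup_nat, ENNReal.iSup_add]
  apply le_antisymm
  · refine iSup_le fun K => ?_
    rw [← Bf_zero (p := p) u, htel K]
    calc (∑ N ∈ Finset.range K, surv p N u) + Bf p u K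
        ≤ (∑ N ∈ Finset.range K, surv p N u) + ∑' k, surv p (k + K) u :=
          add_le_add_right (Bf_le_tail hsupp hmono hone hu K) _
      _ = ∑' n, surv p n u := Summable.sum_add_tsum_nat_add' ENNReal.summable
      _ = gexp p u := rfl
  · have hg : gexp p u = ⨆ K, ∑ n ∈ Finset.range K, surv p n u :=
      ENNReal.tsum_eq_iSup_nat
    rw [hg]
    refine iSup_mono fun K => ?_
    rw [← Bf_zero (p := p) u, htel K]
    exact le_add_right le_rfl

/-! ### Iterates of the ladder operator -/

lemma iter_le_E (q : G → G → ℝ≥0∞) (hq : ∀ x y, q x y ≠ 0 → y ∈ E)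
    {φ ψ : G → ℝ≥0∞} (h : ∀ y ∈ E, φ y ≤ ψ y) :
    ∀ N, ∀ x ∈ E, (kapp q)^[N] φ x ≤ (kapp q)^[N] ψ x := by
  intro N
  induction N with
  | zero => simpa using h
  | succ N ih =>
      intro x hx
      rw [Function.iterate_succ_apply', Function.iterate_succ_apply']
      refine ENNReal.tsum_le_tsum fun y => ?_
      by_cases hy : q x y = 0
      · rw [hy, zero_mul, zero_mul]
      · exact mul_le_mul_right (ih y (hq x y hy)) _

lemma iter_eq_E (q : G → G → ℝ≥0∞) (hq : ∀ x y, q x y ≠ 0 → y ∈ E)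
    {φ ψ : G → ℝ≥0∞} (h : ∀ y ∈ E, φ y = ψ y) :
    ∀ N, ∀ x ∈ E, (kapp q)^[N] φ x = (kapp q)^[N] ψ x := fun N x hx =>
  le_antisymm (iter_le_E q hq (fun y hy => le_of_eq (h y hy)) N x hx)
    (iter_le_E q hq (fun y hy => ge_of_eq (h y hy)) N x hx)

lemma iter_add (q : G → G → ℝ≥0∞) (φ ψ : G → ℝ≥0∞) :
    ∀ (N : ℕ) (x : G), (kapp q)^[N] (fun y => φ y + ψ y) x
      = (kapp q)^[N] φ x + (kapp q)^[N] ψ x := by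
  intro N
  induction N with
  | zero => intro x; rfl
  | succ N ih =>
      intro x
      rw [Function.iterate_succ_apply', Function.iterate_succ_apply',
        Function.iterate_succ_apply']
      rw [show (kapp q)^[N] (fun y => φ y + ψ y)
          = fun y => (kapp q)^[N] φ y + (kapp q)^[N] ψ y from funext fun y => ih y]
      exact kapp_add q _ _ x

lemma iter_mul_const (q : G → G → ℝ≥0∞) (a : ℝ≥0∞) (φ : G → ℝ≥0∞) :
    ∀ (N : ℕ) (x : G), (kapp q)^[N] (fun y => a * φ y) x = a * (kapp q)^[N] φ x := by
  intro N
  induction N with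
  | zero => intro x; rfl
  | succ N ih =>
      intro x
      rw [Function.iterate_succ_apply', Function.iterate_succ_apply']
      rw [show (kapp q)^[N] (fun y => a * φ y)
          = fun y => a * (kapp q)^[N] φ y from funext fun y => ih y]
      exact kapp_mul_const q a _ x

lemma surv_eq_iter (q : G → G → ℝ≥0∞) :
    ∀ N, surv q N = (kapp q)^[N] (fun _ => 1) := by
  intro N
  induction N with
  | zero => funext x; rw [surv_zero]; rfl
  | succ N ih =>
      rw [Function.iterate_succ_apply', ← ih]
      funext x
      exact surv_succ q N x

/-! ### The Riesz decomposition along the ladder chain -/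

lemma decomp (hsupp : ∀ x y, p x y ≠ 0 → x ∈ E ∧ y ∈ E)
    (hsub : ∀ x, (∑' y, p x y) ≤ 1)
    (hmono : ∀ x ∈ E, ∀ y ∈ E, ∀ u ∈ E, p x y ≤ p (x * u) (y * u))
    (hone : (1 : G) ∈ E) :
    ∀ N, ∀ x ∈ E, gexp p x
      = gexp p 1 * (∑ n ∈ Finset.range N, surv (ladder p E) n x)
        + (kapp (ladder p E))^[N] (gexp p) x := by
  intro N
  induction N with
  | zero => intro x hx; simp
  | succ N ih =>
      intro x hx
      have hE : ∀ y ∈ E, gexp p y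
          = gexp p 1 * (fun _ => (1 : ℝ≥0∞)) y + kapp (ladder p E) (gexp p) y := by
        intro y hy
        rw [mul_one, ← PH_gexp hsupp hsub hmono hone hy, add_comm]
      have h1 : (kapp (ladder p E))^[N] (gexp p) x
          = gexp p 1 * (kapp (ladder p E))^[N] (fun _ => 1) x
            + (kapp (ladder p E))^[N] (kapp (ladder p E) (gexp p)) x := by
        rw [iter_eq_E (ladder p E) (fun a b h => ladder_mem hsupp h) hE N x hx]
        rw [iter_add, iter_mul_const]
      rw [Finset.sum_range_succ, ih x hx, h1, ← Function.iterate_succ_apply,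
        ← surv_eq_iter]
      ring

lemma gexp_one_ne_top (hfin : ∀ x ∈ E, gexp p x < ⊤) (hone : (1 : G) ∈ E) :
    gexp p 1 ≠ ⊤ := (hfin 1 hone).ne

lemma V_mul_le (hsupp : ∀ x y, p x y ≠ 0 → x ∈ E ∧ y ∈ E)
    (hsub : ∀ x, (∑' y, p x y) ≤ 1)
    (hmono : ∀ x ∈ E, ∀ y ∈ E, ∀ u ∈ E, p x y ≤ p (x * u) (y * u))
    (hone : (1 : G) ∈ E) {x : G} (hx : x ∈ E) :
    gexp p 1 * V p E x ≤ gexp p x := by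
  unfold V
  rw [ENNReal.tsum_eq_iSup_nat]
  rw [ENNReal.mul_iSup]
  refine iSup_le fun N => ?_
  rw [decomp hsupp hsub hmono hone N x hx]
  exact le_add_right le_rfl

lemma PH_surv_le (hsupp : ∀ x y, p x y ≠ 0 → x ∈ E ∧ y ∈ E)
    (hsub : ∀ x, (∑' y, p x y) ≤ 1)
    (hmono : ∀ x ∈ E, ∀ y ∈ E, ∀ u ∈ E, p x y ≤ p (x * u) (y * u))
    (hone : (1 : G) ∈ E) (hfin : ∀ x ∈ E, gexp p x < ⊤)
    {x : G} (hx : x ∈ E) (N : ℕ) :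
    kapp (ladder p E) (surv p N) x ≤ surv p N x := by
  have hk := key_identity hsupp hmono hone hx N
  have hBfin : Bf p x N ≠ ⊤ :=
    (lt_of_le_of_lt (Bf_le_gexp_one hsub x N) (hfin 1 hone)).ne
  have : kapp (ladder p E) (surv p N) x + Bf p x N ≤ surv p N x + Bf p x N := by
    rw [hk]
    exact add_le_add_right (Bf_antitone hsub x N) _
  exact (ENNReal.add_le_add_iff_right hBfin).mp this

lemma PH_tail_le (hsupp : ∀ x y, p x y ≠ 0 → x ∈ E ∧ y ∈ E)
    (hsub : ∀ x, (∑' y, p x y) ≤ 1)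
    (hmono : ∀ x ∈ E, ∀ y ∈ E, ∀ u ∈ E, p x y ≤ p (x * u) (y * u))
    (hone : (1 : G) ∈ E) (hfin : ∀ x ∈ E, gexp p x < ⊤)
    (M : ℕ) {x : G} (hx : x ∈ E) :
    kapp (ladder p E) (fun y => ∑' k, surv p (k + M) y) x ≤ ∑' k, surv p (k + M) x := by
  rw [kapp_tsum]
  exact ENNReal.tsum_le_tsum fun k => PH_surv_le hsupp hsub hmono hone hfin hx (k + M)

lemma iter_tail_le (hsupp : ∀ x y, p x y ≠ 0 → x ∈ E ∧ y ∈ E)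
    (hsub : ∀ x, (∑' y, p x y) ≤ 1)
    (hmono : ∀ x ∈ E, ∀ y ∈ E, ∀ u ∈ E, p x y ≤ p (x * u) (y * u))
    (hone : (1 : G) ∈ E) (hfin : ∀ x ∈ E, gexp p x < ⊤) (M : ℕ) :
    ∀ N, ∀ x ∈ E, (kapp (ladder p E))^[N] (fun y => ∑' k, surv p (k + M) y) x
      ≤ ∑' k, surv p (k + M) x := by
  intro N
  induction N with
  | zero => intro x hx; exact le_rfl
  | succ N ih =>
      intro x hx
      rw [Function.iterate_succ_apply]
      calc (kapp (ladder p E))^[N] (kapp (ladder p E) (fun y => ∑' k, surv p (k + M) y)) x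
          ≤ (kapp (ladder p E))^[N] (fun y => ∑' k, surv p (k + M) y) x :=
            iter_le_E (ladder p E) (fun a b h => ladder_mem hsupp h)
              (fun y hy => PH_tail_le hsupp hsub hmono hone hfin M hy) N x hx
        _ ≤ ∑' k, surv p (k + M) x := ih x hx

lemma iter_gexp_le (hsupp : ∀ x y, p x y ≠ 0 → x ∈ E ∧ y ∈ E)
    (hsub : ∀ x, (∑' y, p x y) ≤ 1)
    (hmono : ∀ x ∈ E, ∀ y ∈ E, ∀ u ∈ E, p x y ≤ p (x * u) (y * u))
    (hone : (1 : G) ∈ E) (hfin : ∀ x ∈ E, gexp p x < ⊤)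
    {x : G} (hx : x ∈ E) (N M : ℕ) :
    (kapp (ladder p E))^[N] (gexp p) x
      ≤ (M : ℝ≥0∞) * surv (ladder p E) N x + ∑' k, surv p (k + M) x := by
  have hg : gexp p = fun y => (∑ n ∈ Finset.range M, surv p n y) + ∑' k, surv p (k + M) y :=
    funext fun y => (Summable.sum_add_tsum_nat_add' ENNReal.summable).symm
  rw [hg, iter_add]
  refine add_le_add ?_ (iter_tail_le hsupp hsub hmono hone hfin M N x hx)
  calc (kapp (ladder p E))^[N] (fun y => ∑ n ∈ Finset.range M, surv p n y) x
      ≤ (kapp (ladder p E))^[N] (fun _ => (M : ℝ≥0∞)) x := by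
        refine iter_le_E (ladder p E) (fun a b h => ladder_mem hsupp h)
          (fun y hy => ?_) N x hx
        calc (∑ n ∈ Finset.range M, surv p n y)
            ≤ ∑ n ∈ Finset.range M, 1 := Finset.sum_le_sum fun n _ => surv_le_one hsub n y
          _ = (M : ℝ≥0∞) := by simp
    _ = (M : ℝ≥0∞) * surv (ladder p E) N x := by
        rw [show (fun _ : G => (M : ℝ≥0∞)) = fun y => (M : ℝ≥0∞) * (fun _ => (1:ℝ≥0∞)) y
          from funext fun y => (mul_one _).symm]
        rw [iter_mul_const, ← surv_eq_iter]

lemma exists_small (f : ℕ → ℝ≥0∞) (hf : (∑' n, f n) ≠ ⊤) {δ : ℝ≥0∞} (hδ : δ ≠ 0) :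
    ∃ N, f N < δ := by
  by_contra h
  push_neg at h
  apply hf
  refine eq_top_iff.mpr ?_
  calc (⊤ : ℝ≥0∞) = ∑' _ : ℕ, δ := (ENNReal.tsum_const_eq_top_of_ne_zero hδ).symm
    _ ≤ ∑' n, f n := ENNReal.tsum_le_tsum h

lemma exists_tail_small {x : G} (hfx : gexp p x ≠ ⊤) {δ : ℝ≥0∞} (hδ : δ ≠ 0) :
    ∃ M, (∑' k, surv p (k + M) x) < δ := by
  by_contra h
  push_neg at h
  have hP : ∀ M, (∑ n ∈ Finset.range M, surv p n x) + δ ≤ gexp p x := by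
    intro M
    calc (∑ n ∈ Finset.range M, surv p n x) + δ
        ≤ (∑ n ∈ Finset.range M, surv p n x) + ∑' k, surv p (k + M) x :=
          add_le_add_right (h M) _
      _ = gexp p x := Summable.sum_add_tsum_nat_add' ENNReal.summable
  have hsup : gexp p x + δ ≤ gexp p x := by
    conv_lhs => rw [show gexp p x = ∑' n, surv p n x from rfl, ENNReal.tsum_eq_iSup_nat]
    rw [ENNReal.iSup_add]
    exact iSup_le hP
  have hδ0 : δ ≤ 0 := by
    refine ENNReal.le_of_add_le_add_left hfx ?_
    rwa [add_zero]
  exact hδ (le_zero_iff.mp hδ0)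

lemma part4 (hsupp : ∀ x y, p x y ≠ 0 → x ∈ E ∧ y ∈ E)
    (hsub : ∀ x, (∑' y, p x y) ≤ 1)
    (hmono : ∀ x ∈ E, ∀ y ∈ E, ∀ u ∈ E, p x y ≤ p (x * u) (y * u))
    (hone : (1 : G) ∈ E) (hfin : ∀ x ∈ E, gexp p x < ⊤)
    {x : G} (hx : x ∈ E) :
    gexp p 1 * V p E x = gexp p x := by
  refine le_antisymm (V_mul_le hsupp hsub hmono hone hx) ?_
  have hVfin : V p E x ≠ ⊤ := by
    intro hV
    have h1 : (1 : ℝ≥0∞) * V p E x ≤ gexp p 1 * V p E x :=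
      mul_le_mul_left (one_le_gexp p 1) _
    rw [one_mul] at h1
    have := lt_of_le_of_lt (le_trans h1 (V_mul_le hsupp hsub hmono hone hx)) (hfin x hx)
    exact (lt_irrefl ⊤ (hV ▸ this)).elim
  refine ENNReal.le_of_forall_pos_le_add fun ε hε hlt => ?_
  have hδ : ((ε : ℝ≥0∞) / 2) ≠ 0 := by
    simp [ENNReal.div_eq_zero_iff, hε.ne']
  obtain ⟨M, hM⟩ := exists_tail_small (p := p) (hfin x hx).ne hδ
  have hδM : ((ε : ℝ≥0∞) / 2) / (M + 1) ≠ 0 := by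
    refine (ENNReal.div_pos hδ (by simp)).ne'
  obtain ⟨N, hN⟩ := exists_small (fun n => surv (ladder p E) n x) hVfin hδM
  have hMN : (M : ℝ≥0∞) * surv (ladder p E) N x ≤ (ε : ℝ≥0∞) / 2 := by
    calc (M : ℝ≥0∞) * surv (ladder p E) N x
        ≤ ((M : ℝ≥0∞) + 1) * surv (ladder p E) N x :=
          mul_le_mul_left (le_add_right le_rfl) _
      _ ≤ ((M : ℝ≥0∞) + 1) * (((ε : ℝ≥0∞) / 2) / ((M : ℝ≥0∞) + 1)) :=
          mul_le_mul_right hN.le _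
      _ = (ε : ℝ≥0∞) / 2 := ENNReal.mul_div_cancel (by simp) (by simp)
  calc gexp p x
      = gexp p 1 * (∑ n ∈ Finset.range N, surv (ladder p E) n x)
        + (kapp (ladder p E))^[N] (gexp p) x := decomp hsupp hsub hmono hone N x hx
    _ ≤ gexp p 1 * V p E x
        + ((M : ℝ≥0∞) * surv (ladder p E) N x + ∑' k, surv p (k + M) x) := by
        refine add_le_add ?_ (iter_gexp_le hsupp hsub hmono hone hfin hx N M)
        exact mul_le_mul_right (ENNReal.sum_le_tsum _) _
    _ ≤ gexp p 1 * V p E x + ((ε : ℝ≥0∞) / 2 + (ε : ℝ≥0∞) / 2) :=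
        add_le_add_right (add_le_add hMN hM.le) _
    _ = gexp p 1 * V p E x + (ε : ℝ≥0∞) := by rw [ENNReal.add_halves]

end RWAux

end Aux

theorem statement14 {G : Type*} [Group G] [Countable G]
    (p : G → G → ℝ≥0∞) (E : Set G)
    (hsupp : ∀ x y, p x y ≠ 0 → x ∈ E ∧ y ∈ E)
    (hsub : ∀ x, (∑' y, p x y) ≤ 1)
    (hirr : ∀ x ∈ E, ∀ y ∈ E, 0 < hitProb p x y)
    (htrans : ∀ x ∈ E, green p x x < ⊤)
    (hone : (1 : G) ∈ E)
    (hmul : ∀ x ∈ E, ∀ y ∈ E, x * y ∈ E)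
    (hmono : ∀ x ∈ E, ∀ y ∈ E, ∀ u ∈ E, p x y ≤ p (x * u) (y * u))
    (hfin : ∀ x ∈ E, gexp p x < ⊤) :
    (∀ x ∈ E, gexp p x = greenApp p (fun _ => 1) x) ∧
    (∀ x ∈ E, kapp p (gexp p) x + 1 = gexp p x) ∧
    (∀ u ∈ E, gexp p 1 + kapp (ladder p E) (gexp p) u ≤ gexp p u) ∧
    (∀ x ∈ E, V p E x = gexp p x / gexp p 1) := by
  refine ⟨fun x _ => ?_, fun x _ => RWAux.kapp_gexp p x, fun u hu => ?_, fun x hx => ?_⟩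
  · rw [RWAux.gexp_eq_tsum_green]
    exact (tsum_congr fun y => by rw [mul_one]).symm
  · rw [add_comm]
    exact le_of_eq (RWAux.PH_gexp hsupp hsub hmono hone hu)
  · have h0 : gexp p 1 ≠ 0 :=
      fun h => by simpa [h] using RWAux.one_le_gexp p (1 : G)
    rw [ENNReal.eq_div_iff h0 (hfin 1 hone).ne]
    exact RWAux.part4 hsupp hsub hmono hone hfin hx
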